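/- For 0 < t < 1 and any nonnegative integer n, define a_n(t) = ∑_{k≥0, 2k≤n} C(n-k,k) t^k (1-t)^{n-2k}. Then a_n(t) → 1/(1+t) as n → ∞. -/

import Mathlib

noncomputable def Sd (t : ℝ) (n : ℕ) : ℝ :=
  ∑ k ∈ Finset.range (n / 2 + 1), ((n - k).choose k : ℝ) * t ^ k * (1 - t) ^ (n - 2 * k)

lemma Sd_zero (t : ℝ) : Sd t 0 = 1 := by simp [Sd]

lemma Sd_one (t : ℝ) : Sd t 1 = 1 - t := by simp [Sd]

lemma Sd_rec (t : ℝ) (n : ℕ) : Sd t (n + 2) = (1 - t) * Sd t (n + 1) + t * Sd t n := by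
  have hdiv : (n + 2) / 2 + 1 = (n / 2 + 1) + 1 := by omega
  have h1 : Sd t (n + 2)
      = (∑ j ∈ Finset.range (n / 2 + 1),
          (((n + 1 - j).choose (j + 1) : ℝ) * t ^ (j + 1) * (1 - t) ^ (n - 2 * j)))
        + (1 - t) ^ (n + 2) := by
    rw [Sd, hdiv, Finset.sum_range_succ']
    congr 1
    · apply Finset.sum_congr rfl
      intro j hj
      simp only [Finset.mem_range] at hj
      have e1 : n + 2 - (j + 1) = n + 1 - j := by omega
      have e2 : n + 2 - 2 * (j + 1) = n - 2 * j := by omega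
      rw [e1, e2]
    · simp
  have h2 : (1 - t) * Sd t (n + 1)
      = (∑ j ∈ Finset.range (n / 2 + 1),
          (((n - j).choose (j + 1) : ℝ) * t ^ (j + 1) * (1 - t) ^ (n - 2 * j)))
        + (1 - t) ^ (n + 2) := by
    rw [Sd, Finset.mul_sum]
    rw [Finset.sum_range_succ']
    have hsub : Finset.range ((n + 1) / 2) ⊆ Finset.range (n / 2 + 1) := by
      apply Finset.range_subset_range.2; omega
    rw [← Finset.sum_subset hsub]
    · congr 1
      · apply Finset.sum_congr rfl
        intro j hj
        simp only [Finset.mem_range] at hj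
        have e1 : n + 1 - (j + 1) = n - j := by omega
        have e2 : n + 1 - 2 * (j + 1) + 1 = n - 2 * j := by omega
        rw [e1, ← e2, pow_succ]
        ring
      · simp [pow_succ]
        ring
    · intro j hj hnj
      simp only [Finset.mem_range] at hj hnj
      have : (n - j).choose (j + 1) = 0 := by
        apply Nat.choose_eq_zero_of_lt; omega
      simp [this]
  have h3 : t * Sd t n
      = ∑ j ∈ Finset.range (n / 2 + 1),
          (((n - j).choose j : ℝ) * t ^ (j + 1) * (1 - t) ^ (n - 2 * j)) := by
    rw [Sd, Finset.mul_sum]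
    apply Finset.sum_congr rfl
    intro j hj
    ring
  rw [h1, h2, h3, add_right_comm, ← Finset.sum_add_distrib]
  congr 1
  apply Finset.sum_congr rfl
  intro j hj
  simp only [Finset.mem_range] at hj
  have e1 : n + 1 - j = (n - j) + 1 := by omega
  rw [e1, Nat.choose_succ_succ]
  push_cast
  ring

lemma Sd_closed (t : ℝ) (ht : (1 + t) ≠ 0) : ∀ n, Sd t n = (1 + (-1 : ℝ) ^ n * t ^ (n + 1)) / (1 + t) := by
  intro n
  induction n using Nat.strong_induction_on with
  | _ n ih =>
    match n with
    | 0 => rw [Sd_zero]; field_simp; ring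
    | 1 => rw [Sd_one]; field_simp; ring
    | (n + 2) =>
      rw [Sd_rec, ih (n + 1) (by omega), ih n (by omega)]
      field_simp
      ring_nf

theorem bernstein_short_diagonal_tendsto (t : ℝ) (h0 : 0 < t) (h1 : t < 1) :
    Filter.Tendsto
      (fun n : ℕ =>
        ∑ k ∈ Finset.range (n / 2 + 1), ((n - k).choose k : ℝ) * t ^ k * (1 - t) ^ (n - 2 * k))
      Filter.atTop (nhds (1 / (1 + t))) := by
  have ht : (1 + t) ≠ 0 := by linarith
  have hlim : Filter.Tendsto (fun n : ℕ => (-t) ^ n) Filter.atTop (nhds 0) := by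
    apply tendsto_pow_atTop_nhds_zero_of_norm_lt_one
    rw [norm_neg, Real.norm_eq_abs, abs_of_pos h0]
    exact h1
  have h : Filter.Tendsto (fun n : ℕ => (1 + t * (-t) ^ n) / (1 + t)) Filter.atTop
      (nhds ((1 + t * 0) / (1 + t))) :=
    (Filter.Tendsto.add tendsto_const_nhds (hlim.const_mul t)).div_const (1 + t)
  simp only [mul_zero, add_zero] at h
  apply h.congr
  intro n
  show (1 + t * (-t) ^ n) / (1 + t) = Sd t n
  rw [Sd_closed t ht n]
  congr 1
  rw [neg_pow, pow_succ]
  ring
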